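/- Let H be a complex Hilbert space, A, K : H → H bounded linear operators with K compact, and suppose B := A + K is injective. Let (X_n) and (Y_n) be sequences of finite-dimensional subspaces of H such that for every y ∈ H the distance from y to Y_n tends to 0 as n → ∞. Suppose there are constants C_Θ > 0 and c_a > 0 and, for each n, a linear map Θ_n : X_n → Y_n such that ‖Θ_n x‖ ≤ C_Θ‖x‖ and |⟪Θ_n x, A x⟫| ≥ c_a‖x‖² for all x ∈ X_n and all n. Then there exist n₀ ∈ ℕ and a constant c > 0 such that for all n ≥ n₀ and all x ∈ X_n: sup over nonzero y ∈ Y_n of |⟪y, B x⟫|/‖y‖ is ≥ c‖x‖. -/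

import Mathlib

open scoped ComplexInnerProductSpace

/-- Abstract form of Lemma 5.3 of the paper (a generalization of the discrete inf-sup theorem to
compact perturbations of a T-coercive operator): if `B = A + K` with `K` compact and `B`
injective, the test spaces `Y n` are asymptotically dense, and `A` is uniformly `Θ_n`-coercive
on the trial spaces `X n` with uniformly bounded maps `Θ_n : X n → Y n`, then the Galerkin form
`b(x, y) = ⟪y, B x⟫` satisfies a uniform discrete inf-sup condition for all sufficiently
large `n`. -/
theorem uniform_discrete_inf_sup_of_compactly_perturbed_T_coercive
    {H : Type*} [NormedAddCommGroup H] [InnerProductSpace ℂ H] [CompleteSpace H]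
    (A K : H →L[ℂ] H) (hK : IsCompactOperator (K : H → H))
    (hinj : Function.Injective (A + K))
    (X Y : ℕ → Submodule ℂ H)
    (hXfd : ∀ n, FiniteDimensional ℂ (X n)) (hYfd : ∀ n, FiniteDimensional ℂ (Y n))
    (hdense : ∀ y : H,
      Filter.Tendsto (fun n => Metric.infDist y (Y n : Set H)) Filter.atTop (nhds 0))
    (CΘ ca : ℝ) (hCΘ : 0 < CΘ) (hca : 0 < ca)
    (Θ : ∀ n, X n →ₗ[ℂ] H)
    (hΘmem : ∀ n (x : X n), Θ n x ∈ Y n)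
    (hΘbd : ∀ n (x : X n), ‖Θ n x‖ ≤ CΘ * ‖(x : H)‖)
    (hΘcoer : ∀ n (x : X n), ca * ‖(x : H)‖ ^ 2 ≤ ‖⟪Θ n x, A (x : H)⟫‖) :
    ∃ (n₀ : ℕ) (c : ℝ), 0 < c ∧ ∀ n, n₀ ≤ n → ∀ x : X n,
      c * ‖(x : H)‖ ≤
        ⨆ y : {y : H // y ∈ Y n ∧ y ≠ 0}, ‖⟪(y : H), (A + K) (x : H)⟫‖ / ‖(y : H)‖ := by
  by_contra hcon
  push_neg at hcon
  set B : H →L[ℂ] H := A + K with hBdef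
  -- extract the contradiction sequence
  have hsel : ∀ k : ℕ, ∃ n, k ≤ n ∧ ∃ x : X n,
      (⨆ y : {y : H // y ∈ Y n ∧ y ≠ 0}, ‖⟪(y : H), B (x : H)⟫‖ / ‖(y : H)‖)
        < (1 / (k + 1 : ℝ)) * ‖(x : H)‖ := by
    intro k
    obtain ⟨n, hn, x, hx⟩ := hcon k (1 / (k + 1 : ℝ)) (by positivity)
    exact ⟨n, hn, x, hx⟩
  choose n hn x hx using hsel
  have hnt : Filter.Tendsto n Filter.atTop Filter.atTop :=
    Filter.tendsto_atTop_mono hn Filter.tendsto_id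
  have honek : Filter.Tendsto (fun k : ℕ => 1 / (k + 1 : ℝ)) Filter.atTop (nhds 0) :=
    tendsto_one_div_add_atTop_nhds_zero_nat
  -- the supremum is nonnegative and the terms are below it
  have hterm : ∀ k (y : H), y ∈ Y (n k) →
      ‖⟪y, B ((x k : H))⟫‖ ≤ (1 / (k + 1 : ℝ)) * ‖(x k : H)‖ * ‖y‖ := by
    intro k y hy
    rcases eq_or_ne y 0 with rfl | hy0
    · simp
    have hbdd : BddAbove (Set.range fun y : {y : H // y ∈ Y (n k) ∧ y ≠ 0} =>
        ‖⟪(y : H), B ((x k : H))⟫‖ / ‖(y : H)‖) := by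
      refine ⟨‖B ((x k : H))‖, ?_⟩
      rintro - ⟨⟨z, hz, hz0⟩, rfl⟩
      rw [div_le_iff₀ (norm_pos_iff.mpr hz0)]
      calc ‖⟪z, B ((x k : H))⟫‖ ≤ ‖z‖ * ‖B ((x k : H))‖ := norm_inner_le_norm _ _
        _ = ‖B ((x k : H))‖ * ‖z‖ := mul_comm _ _
    have h1 : ‖⟪y, B ((x k : H))⟫‖ / ‖y‖ ≤
        ⨆ y : {y : H // y ∈ Y (n k) ∧ y ≠ 0}, ‖⟪(y : H), B ((x k : H))⟫‖ / ‖(y : H)‖ :=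
      le_ciSup hbdd (⟨y, hy, hy0⟩ : {y : H // y ∈ Y (n k) ∧ y ≠ 0})
    have h2 := h1.trans_lt (hx k)
    rw [div_lt_iff₀ (norm_pos_iff.mpr hy0)] at h2
    exact le_of_lt h2
  -- x k is nonzero
  have hxpos : ∀ k, 0 < ‖(x k : H)‖ := by
    intro k
    rcases (norm_nonneg ((x k : H))).lt_or_eq with h | h
    · exact h
    have hsup0 : (0 : ℝ) ≤
        ⨆ y : {y : H // y ∈ Y (n k) ∧ y ≠ 0}, ‖⟪(y : H), B ((x k : H))⟫‖ / ‖(y : H)‖ :=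
      Real.iSup_nonneg fun y => div_nonneg (norm_nonneg _) (norm_nonneg _)
    have hxk := hx k
    rw [← h, mul_zero] at hxk
    linarith
  -- normalized sequence
  set ux := fun k => ((‖(x k : H)‖⁻¹ : ℝ) : ℂ) • x k with huxdef
  set u : ℕ → H := fun k => ((ux k : H)) with hudef
  have hucoe : ∀ k, u k = ((‖(x k : H)‖⁻¹ : ℝ) : ℂ) • ((x k : H)) := fun k => rfl
  have hunorm : ∀ k, ‖u k‖ = 1 := by
    intro k
    rw [hucoe, norm_smul]
    simp [norm_inv, inv_mul_cancel₀ (ne_of_gt (hxpos k))]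
  have hukey : ∀ k (y : H), y ∈ Y (n k) →
      ‖⟪y, B (u k)⟫‖ ≤ (1 / (k + 1 : ℝ)) * ‖y‖ := by
    intro k y hy
    rw [hucoe, map_smul, inner_smul_right, norm_mul]
    have h1 := hterm k y hy
    have h2 : ‖((‖(x k : H)‖⁻¹ : ℝ) : ℂ)‖ = ‖(x k : H)‖⁻¹ := by
      simp [abs_of_nonneg (inv_nonneg.mpr (norm_nonneg _))]
    rw [h2]
    rw [inv_mul_le_iff₀ (hxpos k)]
    calc ‖⟪y, B ((x k : H))⟫‖ ≤ 1 / (k + 1 : ℝ) * ‖(x k : H)‖ * ‖y‖ := h1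
      _ = ‖(x k : H)‖ * (1 / (k + 1 : ℝ) * ‖y‖) := by ring
  -- Step A : ⟪z, B u k⟫ → 0
  have hBweak : ∀ z : H, Filter.Tendsto (fun k => ‖⟪z, B (u k)⟫‖) Filter.atTop (nhds 0) := by
    intro z
    -- choose approximants
    have hyex : ∀ k, ∃ y ∈ (Y (n k) : Set H), dist z y <
        Metric.infDist z (Y (n k) : Set H) + 1 / (k + 1 : ℝ) := by
      intro k
      refine (Metric.infDist_lt_iff ⟨0, (Y (n k)).zero_mem⟩).mp ?_
      have : (0 : ℝ) < 1 / (k + 1 : ℝ) := by positivity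
      linarith
    choose y hymem hyd using hyex
    have hd0 : Filter.Tendsto (fun k => dist z (y k)) Filter.atTop (nhds 0) := by
      have hup : Filter.Tendsto
          (fun k => Metric.infDist z (Y (n k) : Set H) + 1 / (k + 1 : ℝ))
          Filter.atTop (nhds 0) := by
        have := ((hdense z).comp hnt).add honek
        simpa using this
      exact squeeze_zero (fun k => dist_nonneg) (fun k => (hyd k).le) hup
    have hbound : ∀ k, ‖⟪z, B (u k)⟫‖ ≤
        dist z (y k) * ‖B‖ + (1 / (k + 1 : ℝ)) * (‖z‖ + dist z (y k)) := by
      intro k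
      have hsplit : ⟪z, B (u k)⟫ = ⟪z - y k, B (u k)⟫ + ⟪y k, B (u k)⟫ := by
        rw [inner_sub_left]; ring
      rw [hsplit]
      refine (norm_add_le _ _).trans (add_le_add ?_ ?_)
      · calc ‖⟪z - y k, B (u k)⟫‖ ≤ ‖z - y k‖ * ‖B (u k)‖ := norm_inner_le_norm _ _
          _ ≤ ‖z - y k‖ * (‖B‖ * ‖u k‖) :=
            mul_le_mul_of_nonneg_left (B.le_opNorm _) (norm_nonneg _)
          _ = dist z (y k) * ‖B‖ := by rw [dist_eq_norm, hunorm k]; ring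
      · calc ‖⟪y k, B (u k)⟫‖ ≤ (1 / (k + 1 : ℝ)) * ‖y k‖ := hukey k (y k) (hymem k)
          _ ≤ (1 / (k + 1 : ℝ)) * (‖z‖ + dist z (y k)) := by
            refine mul_le_mul_of_nonneg_left ?_ (by positivity)
            have h1 : y k = z - (z - y k) := by abel
            rw [dist_eq_norm]
            calc ‖y k‖ = ‖z - (z - y k)‖ := by rw [← h1]
              _ ≤ ‖z‖ + ‖z - y k‖ := norm_sub_le _ _
    have hg : Filter.Tendsto
        (fun k : ℕ => dist z (y k) * ‖B‖ + (1 / (k + 1 : ℝ)) * (‖z‖ + dist z (y k)))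
        Filter.atTop (nhds 0) := by
      have h1 : Filter.Tendsto (fun k => dist z (y k) * ‖B‖) Filter.atTop (nhds 0) := by
        simpa using hd0.mul_const ‖B‖
      have h2 : Filter.Tendsto (fun k : ℕ => (1 / (k + 1 : ℝ)) * (‖z‖ + dist z (y k)))
          Filter.atTop (nhds 0) := by
        have := honek.mul (tendsto_const_nhds.add hd0 : Filter.Tendsto
          (fun k : ℕ => ‖z‖ + dist z (y k)) Filter.atTop (nhds (‖z‖ + 0)))
        simpa using this
      simpa using h1.add h2
    exact squeeze_zero (fun k => norm_nonneg _) hbound hg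
  -- Step B : ⟪w, u k⟫ → 0
  have hweak : ∀ w : H, Filter.Tendsto (fun k => ‖⟪w, u k⟫‖) Filter.atTop (nhds 0) := by
    intro w
    rw [Metric.tendsto_atTop]
    intro ε hε
    -- density of range of adjoint
    have hz : ∃ z : H, ‖ContinuousLinearMap.adjoint B z - w‖ < ε / 2 := by
      have hR : (LinearMap.range ((ContinuousLinearMap.adjoint B : H →L[ℂ] H) : H →ₗ[ℂ] H)).topologicalClosure = ⊤ := by
        rw [Submodule.topologicalClosure_eq_top_iff, Submodule.eq_bot_iff]
        intro v hv
        have h1 : ⟪ContinuousLinearMap.adjoint B (B v), v⟫ = 0 :=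
          hv _ (LinearMap.mem_range_self _ _)
        rw [ContinuousLinearMap.adjoint_inner_left] at h1
        have h2 : B v = 0 := by rwa [inner_self_eq_zero] at h1
        exact hinj (a₂ := 0) (by simpa using h2)
      have hw : w ∈ closure
          ((LinearMap.range ((ContinuousLinearMap.adjoint B : H →L[ℂ] H) : H →ₗ[ℂ] H) : Submodule ℂ H) : Set H) := by
        have : w ∈ ((LinearMap.range ((ContinuousLinearMap.adjoint B : H →L[ℂ] H) : H →ₗ[ℂ] H)).topologicalClosure :
            Set H) := by rw [hR]; trivial
        simpa [Submodule.topologicalClosure_coe] using this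
      rw [Metric.mem_closure_iff] at hw
      obtain ⟨v, hv, hdv⟩ := hw (ε / 2) (by positivity)
      obtain ⟨z, rfl⟩ := hv
      exact ⟨z, by rwa [← dist_eq_norm, dist_comm]⟩
    obtain ⟨z, hzw⟩ := hz
    have hBz := hBweak z
    rw [Metric.tendsto_atTop] at hBz
    obtain ⟨N, hN⟩ := hBz (ε / 2) (by positivity)
    refine ⟨N, fun k hk => ?_⟩
    have hNk := hN k hk
    rw [Real.dist_eq, sub_zero, abs_of_nonneg (norm_nonneg _)] at hNk ⊢
    have hsplit : ⟪w, u k⟫ = ⟪w - ContinuousLinearMap.adjoint B z, u k⟫ + ⟪z, B (u k)⟫ := by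
      rw [inner_sub_left, ContinuousLinearMap.adjoint_inner_left]; ring
    calc ‖⟪w, u k⟫‖ ≤ ‖⟪w - ContinuousLinearMap.adjoint B z, u k⟫‖ + ‖⟪z, B (u k)⟫‖ := by
          rw [hsplit]; exact norm_add_le _ _
      _ ≤ ‖w - ContinuousLinearMap.adjoint B z‖ * ‖u k‖ + ‖⟪z, B (u k)⟫‖ :=
          add_le_add_left (norm_inner_le_norm _ _) _
      _ < ε / 2 + ε / 2 := by
          rw [hunorm k, mul_one]
          refine add_lt_add ?_ hNk
          rwa [← norm_neg, neg_sub]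
      _ = ε := by ring
  -- Step C : K (u k) → 0
  have hKu : Filter.Tendsto (fun k => K (u k)) Filter.atTop (nhds 0) := by
    obtain ⟨M, hMc, hMn⟩ := hK
    obtain ⟨r, hr, hrsub⟩ := Metric.mem_nhds_iff.mp hMn
    set M' : Set H := (fun m => ((2 / r : ℝ) : ℂ) • m) '' M with hM'def
    have hM'c : IsCompact M' := hMc.image (continuous_const_smul _)
    have hmem : ∀ k, K (u k) ∈ M' := by
      intro k
      have h1 : ((r / 2 : ℝ) : ℂ) • u k ∈ Metric.ball (0 : H) r := by
        rw [Metric.mem_ball, dist_zero_right, norm_smul, hunorm k, mul_one]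
        have : ‖((r / 2 : ℝ) : ℂ)‖ = r / 2 := by
          rw [Complex.norm_real, Real.norm_of_nonneg (by linarith : (0:ℝ) ≤ r / 2)]
        rw [this]; linarith
      have h2 : K (((r / 2 : ℝ) : ℂ) • u k) ∈ M := hrsub h1
      refine ⟨K (((r / 2 : ℝ) : ℂ) • u k), h2, ?_⟩
      show ((2 / r : ℝ) : ℂ) • K (((r / 2 : ℝ) : ℂ) • u k) = K (u k)
      rw [map_smul, smul_smul]
      have hsc : ((2 / r : ℝ) : ℂ) * ((r / 2 : ℝ) : ℂ) = 1 := by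
        rw [← Complex.ofReal_mul]
        have : (2 / r) * (r / 2) = (1 : ℝ) := by field_simp
        rw [this, Complex.ofReal_one]
      rw [hsc, one_smul]
    refine Filter.tendsto_of_subseq_tendsto fun ns hns => ?_
    obtain ⟨a, haM, φ, hφ, hφt⟩ := hM'c.tendsto_subseq (x := fun i => K (u (ns i)))
      (fun i => hmem (ns i))
    refine ⟨φ, ?_⟩
    have ha : a = 0 := by
      have hinner : ∀ w : H, ⟪w, a⟫ = 0 := by
        intro w
        have h1 : Filter.Tendsto (fun i => ⟪w, K (u (ns (φ i)))⟫) Filter.atTop (nhds ⟪w, a⟫) :=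
          (continuous_const.inner continuous_id).continuousAt.tendsto.comp hφt
        have h2 : Filter.Tendsto (fun i => ⟪w, K (u (ns (φ i)))⟫) Filter.atTop (nhds 0) := by
          have heq : ∀ i, ⟪w, K (u (ns (φ i)))⟫ =
              ⟪ContinuousLinearMap.adjoint K w, u (ns (φ i))⟫ := by
            intro i; rw [ContinuousLinearMap.adjoint_inner_left]
          simp_rw [heq]
          have hnorm : Filter.Tendsto
              (fun i => ‖⟪ContinuousLinearMap.adjoint K w, u (ns (φ i))⟫‖)
              Filter.atTop (nhds 0) :=
            (hweak (ContinuousLinearMap.adjoint K w)).comp (hns.comp hφ.tendsto_atTop)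
          rw [← tendsto_zero_iff_norm_tendsto_zero] at hnorm
          exact hnorm
        exact tendsto_nhds_unique h1 h2
      have := hinner a
      rwa [inner_self_eq_zero] at this
    rwa [ha] at hφt
  -- Step D : contradiction
  have hfinal : ∀ k : ℕ, ca ≤ CΘ * (1 / (k + 1 : ℝ)) + CΘ * ‖K (u k)‖ := by
    intro k
    have hc : ca * ‖u k‖ ^ 2 ≤ ‖⟪Θ (n k) (ux k), A (u k)⟫‖ := hΘcoer (n k) (ux k)
    have hc' : ca ≤ ‖⟪Θ (n k) (ux k), A (u k)⟫‖ := by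
      have : ca * ‖u k‖ ^ 2 = ca := by rw [hunorm k]; ring
      calc ca = ca * ‖u k‖ ^ 2 := this.symm
        _ ≤ _ := hc
    have hAB : A (u k) = B (u k) - K (u k) := by
      rw [hBdef]; simp
    have hsplit : ‖⟪Θ (n k) (ux k), A (u k)⟫‖ ≤
        ‖⟪Θ (n k) (ux k), B (u k)⟫‖ + ‖⟪Θ (n k) (ux k), K (u k)⟫‖ := by
      rw [hAB, inner_sub_right]
      exact norm_sub_le _ _
    have hΘn : ‖Θ (n k) (ux k)‖ ≤ CΘ := by
      calc ‖Θ (n k) (ux k)‖ ≤ CΘ * ‖((ux k : H))‖ := hΘbd (n k) (ux k)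
        _ = CΘ * ‖u k‖ := rfl
        _ = CΘ := by rw [hunorm k, mul_one]
    have h1 : ‖⟪Θ (n k) (ux k), B (u k)⟫‖ ≤ (1 / (k + 1 : ℝ)) * CΘ := by
      calc ‖⟪Θ (n k) (ux k), B (u k)⟫‖ ≤ (1 / (k + 1 : ℝ)) * ‖Θ (n k) (ux k)‖ :=
            hukey k _ (hΘmem (n k) (ux k))
        _ ≤ (1 / (k + 1 : ℝ)) * CΘ := mul_le_mul_of_nonneg_left hΘn (by positivity)
    have h2 : ‖⟪Θ (n k) (ux k), K (u k)⟫‖ ≤ CΘ * ‖K (u k)‖ := by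
      calc ‖⟪Θ (n k) (ux k), K (u k)⟫‖ ≤ ‖Θ (n k) (ux k)‖ * ‖K (u k)‖ :=
            norm_inner_le_norm _ _
        _ ≤ CΘ * ‖K (u k)‖ := mul_le_mul_of_nonneg_right hΘn (norm_nonneg _)
    calc ca ≤ ‖⟪Θ (n k) (ux k), A (u k)⟫‖ := hc'
      _ ≤ ‖⟪Θ (n k) (ux k), B (u k)⟫‖ + ‖⟪Θ (n k) (ux k), K (u k)⟫‖ := hsplit
      _ ≤ (1 / (k + 1 : ℝ)) * CΘ + CΘ * ‖K (u k)‖ := add_le_add h1 h2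
      _ = CΘ * (1 / (k + 1 : ℝ)) + CΘ * ‖K (u k)‖ := by ring
  have hgl : Filter.Tendsto (fun k : ℕ => CΘ * (1 / (k + 1 : ℝ)) + CΘ * ‖K (u k)‖)
      Filter.atTop (nhds 0) := by
    have h1 : Filter.Tendsto (fun k : ℕ => CΘ * (1 / (k + 1 : ℝ))) Filter.atTop (nhds 0) := by
      simpa using honek.const_mul CΘ
    have h2 : Filter.Tendsto (fun k => CΘ * ‖K (u k)‖) Filter.atTop (nhds 0) := by
      have := (hKu.norm).const_mul CΘ
      simpa using this
    simpa using h1.add h2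
  have : ca ≤ 0 := ge_of_tendsto hgl (Filter.Eventually.of_forall hfinal)
  linarith
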